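/- Let n = p_1^{r_1}···p_k^{r_k} with 2 < p_1 < ··· < p_k odd primes and r_i ≥ 1. For any positive integer e with e(e−1) dividing gcd(p_1−1, ..., p_k−1), there exists an (en, (en−1)/(e−1) + 1, e−2) zero-difference balanced function from (Z_{en}, +) to (Z_{(en−1)/(e−1)+1}, +). -/

import Mathlib

open Finset

section Construction

variable {e n : ℕ} (g : ZMod n)

/-- orbit label of `x` under multiplication by powers of `g` -/
def Olab (x : ZMod n) : Set (ZMod n) := Set.range fun j : ℕ => g ^ j * x

variable (e) in
/-- the fiber-classifying function -/
def Fmap : ZMod e × ZMod n → (Unit ⊕ Unit) ⊕ (Set (ZMod n) ⊕ ZMod n) :=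
  fun P =>
    if P.2 = 0 then (if P.1 = 0 then .inl (.inl ()) else .inl (.inr ()))
    else if P.1 = 0 then .inr (.inl (Olab g P.2))
    else .inr (.inr (P.2 * g ^ (e - P.1.val)))

lemma Fmap_eq_iff [NeZero e] (P Q : ZMod e × ZMod n) :
    Fmap e g P = Fmap e g Q ↔
      (P.2 = 0 ∧ Q.2 = 0 ∧ (P.1 = 0 ↔ Q.1 = 0)) ∨
      (P.2 ≠ 0 ∧ Q.2 ≠ 0 ∧ P.1 = 0 ∧ Q.1 = 0 ∧ Olab g P.2 = Olab g Q.2) ∨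
      (P.2 ≠ 0 ∧ Q.2 ≠ 0 ∧ P.1 ≠ 0 ∧ Q.1 ≠ 0 ∧
        P.2 * g ^ (e - P.1.val) = Q.2 * g ^ (e - Q.1.val)) := by
  unfold Fmap
  split_ifs <;> simp_all

lemma val_bounds' [NeZero e] {t : ZMod e} (ht : t ≠ 0) : 1 ≤ t.val ∧ t.val ≤ e - 1 := by
  have h1 := ZMod.val_lt t
  have h2 : t.val ≠ 0 := fun h => ht ((ZMod.val_eq_zero t).mp h)
  omega

section hg
variable (he : 2 ≤ e) (hg1 : g ^ (e - 1) = 1)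
include he hg1

lemma gpow_mod (a : ℕ) : g ^ a = g ^ (a % (e - 1)) := by
  conv_lhs => rw [← Nat.div_add_mod a (e - 1), pow_add, pow_mul, hg1, one_pow, one_mul]

lemma isUnit_g : IsUnit g := by
  refine IsUnit.of_mul_eq_one (a := g) (g ^ (e - 2)) ?_
  rw [← pow_succ']
  rw [show e - 2 + 1 = e - 1 by omega, hg1]

lemma Olab_self (x : ZMod n) : x ∈ Olab g x := ⟨0, by simp⟩

lemma Olab_eq_of_mem {x y : ZMod n} (h : y ∈ Olab g x) : Olab g y = Olab g x := by
  obtain ⟨j, rfl⟩ := h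
  ext z
  simp only [Olab, Set.mem_range]
  constructor
  · rintro ⟨i, rfl⟩
    exact ⟨i + j, by rw [pow_add, mul_assoc]⟩
  · rintro ⟨i, rfl⟩
    refine ⟨i + ((e - 1) - j % (e - 1)), ?_⟩
    rw [← mul_assoc, ← pow_add]
    rw [gpow_mod g he hg1 (i + ((e - 1) - j % (e - 1)) + j), gpow_mod g he hg1 i]
    congr 2
    have h1 : 0 < e - 1 := by omega
    have h2 : j % (e - 1) < e - 1 := Nat.mod_lt _ h1
    have h3 : (e - 1) * (j / (e - 1)) + j % (e - 1) = j := Nat.div_add_mod j (e - 1)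
    have h4 : i + ((e - 1) - j % (e - 1)) + j = i + (e - 1) * (j / (e - 1) + 1) := by
      rw [Nat.mul_add, Nat.mul_one]; omega
    rw [h4, Nat.add_mul_mod_self_left]

lemma Olab_eq_iff {x y : ZMod n} :
    Olab g y = Olab g x ↔ ∃ j, j ≤ e - 2 ∧ y = g ^ j * x := by
  constructor
  · intro h
    have hy : y ∈ Olab g x := h ▸ Olab_self g he hg1 y
    obtain ⟨j, hj⟩ := hy
    refine ⟨j % (e - 1), by
      have := Nat.mod_lt j (show 0 < e - 1 by omega); omega, ?_⟩
    rw [← gpow_mod g he hg1 j]; exact hj.symm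
  · rintro ⟨j, _, rfl⟩
    exact Olab_eq_of_mem g he hg1 ⟨j, rfl⟩

variable (hgu : ∀ j, 1 ≤ j → j ≤ e - 2 → IsUnit (g ^ j - 1))
include hgu

lemma gdiff_unit {A B : ℕ} (hAB : A < B) (hB : B - A ≤ e - 2) : IsUnit (g ^ B - g ^ A) := by
  have h1 : g ^ B - g ^ A = g ^ A * (g ^ (B - A) - 1) := by
    rw [mul_sub, mul_one, ← pow_add]
    congr 2
    omega
  rw [h1]
  exact ((isUnit_g g he hg1).pow A).mul (hgu (B - A) (by omega) hB)

lemma cancel_pow_ne {x : ZMod n} {A B : ℕ} (h1 : 1 ≤ A) (h2 : A ≤ e - 1) (h3 : 1 ≤ B)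
    (h4 : B ≤ e - 1) (hne : A ≠ B) (h : x * g ^ A = x * g ^ B) : x = 0 := by
  rcases Nat.lt_or_ge A B with hlt | hge
  · have hu := gdiff_unit g he hg1 hgu hlt (by omega)
    have : x * (g ^ B - g ^ A) = 0 := by rw [mul_sub, ← h, sub_self]
    exact (hu.mul_left_eq_zero).mp this
  · have hlt : B < A := by omega
    have hu := gdiff_unit g he hg1 hgu hlt (by omega)
    have : x * (g ^ A - g ^ B) = 0 := by rw [mul_sub, h, sub_self]
    exact (hu.mul_left_eq_zero).mp this

lemma inv_sol {j : ℕ} (h1 : 1 ≤ j) (h2 : j ≤ e - 2) (y : ZMod n) :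
    (g ^ j - 1) * (Ring.inverse (g ^ j - 1) * y) = y := by
  rw [← mul_assoc, Ring.mul_inverse_cancel _ (hgu j h1 h2), one_mul]

lemma count_caseA [NeZero e] [NeZero n] {c : ZMod e} (hc : c ≠ 0) :
    {P : ZMod e × ZMod n | Fmap e g (P + (c, 0)) = Fmap e g P}.ncard = e - 2 := by
  classical
  have hset : {P : ZMod e × ZMod n | Fmap e g (P + (c, 0)) = Fmap e g P} =
      ↑((((univ : Finset (ZMod e)).erase 0).erase (-c)).image
        (fun t => ((t, 0) : ZMod e × ZMod n))) := by
    ext ⟨t, x⟩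
    simp only [Set.mem_setOf_eq, coe_image, Set.mem_image, mem_coe, mem_erase, mem_univ,
      and_true]
    have hadd : ((t, x) : ZMod e × ZMod n) + (c, 0) = (t + c, x + 0) := rfl
    rw [hadd, Fmap_eq_iff]
    simp only [add_zero]
    constructor
    · rintro (⟨h1, h2, h3⟩ | ⟨h1, h2, h3, h4, h5⟩ | ⟨h1, h2, h3, h4, h5⟩)
      · have ht : t ≠ 0 := fun h0 => hc (by
          have := h3.mpr h0; rwa [h0, zero_add] at this)
        have htc : t ≠ -c := fun h0 => ht (h3.mp (by rw [h0]; ring))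
        exact ⟨t, ⟨htc, ht⟩, by rw [h2]⟩
      · exact absurd (by rw [h4, zero_add] at h3; exact h3) hc
      · exfalso
        have hv1 := val_bounds' (e := e) h3
        have hv2 := val_bounds' (e := e) h4
        have hne : (t + c).val ≠ t.val := by
          intro h0
          exact hc (by simpa using (ZMod.val_injective e h0))
        exact h2 (cancel_pow_ne g he hg1 hgu (by omega) (by omega) (by omega) (by omega)
          (by omega) h5)
    · rintro ⟨a, ⟨hac, ha⟩, hEq⟩
      rw [Prod.mk.injEq] at hEq
      obtain ⟨rfl, h0⟩ := hEq
      subst h0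
      refine Or.inl ⟨rfl, rfl, ⟨fun h => absurd (eq_neg_of_add_eq_zero_left h) hac,
        fun h => absurd h ha⟩⟩
  rw [hset, Set.ncard_coe_finset,
    Finset.card_image_of_injective _ (fun a b hab => by
      simpa using (Prod.mk.injEq _ _ _ _ ▸ hab).1),
    Finset.card_erase_of_mem, Finset.card_erase_of_mem] <;>
    simp [neg_eq_zero, hc, ZMod.card]
  omega

lemma count_caseB [NeZero e] [NeZero n] {y : ZMod n} (hy : y ≠ 0) :
    {P : ZMod e × ZMod n | Fmap e g (P + (0, y)) = Fmap e g P}.ncard = e - 2 := by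
  classical
  have hset : {P : ZMod e × ZMod n | Fmap e g (P + (0, y)) = Fmap e g P} =
      ↑((Finset.Icc 1 (e - 2)).image
        (fun j => (((0 : ZMod e), Ring.inverse (g ^ j - 1) * y) : ZMod e × ZMod n))) := by
    ext ⟨t, x⟩
    simp only [Set.mem_setOf_eq, coe_image, Set.mem_image, mem_coe, mem_Icc]
    have hadd : ((t, x) : ZMod e × ZMod n) + (0, y) = (t + 0, x + y) := rfl
    rw [hadd, Fmap_eq_iff]
    simp only [add_zero]
    constructor
    · rintro (⟨h1, h2, h3⟩ | ⟨h1, h2, h3, h4, h5⟩ | ⟨h1, h2, h3, h4, h5⟩)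
      · exact absurd (by simpa [h2] using h1) hy
      · obtain ⟨j, hj, hxy⟩ := (Olab_eq_iff g he hg1).mp h5
        have hj1 : 1 ≤ j := by
          rcases Nat.eq_zero_or_pos j with h0 | h0
          · exfalso; apply hy; rw [h0, pow_zero, one_mul] at hxy
            exact add_eq_left.mp hxy
          · exact h0
        have hu := hgu j hj1 hj
        have hyx : (g ^ j - 1) * x = y := by rw [sub_mul, one_mul, ← hxy]; ring
        have hxval : x = Ring.inverse (g ^ j - 1) * y := by
          rw [← hyx, ← mul_assoc, Ring.inverse_mul_cancel _ hu, one_mul]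
        exact ⟨j, ⟨hj1, hj⟩, by rw [h4, hxval]⟩
      · exfalso
        have hE : (x + y - x) * g ^ (e - t.val) = 0 := by rw [sub_mul, h5, sub_self]
        have hE2 : y * g ^ (e - t.val) = 0 := by rw [← hE]; ring_nf
        exact hy ((((isUnit_g g he hg1).pow (e - t.val)).mul_left_eq_zero).mp hE2)
    · rintro ⟨j, ⟨hj1, hj2⟩, hEq⟩
      rw [Prod.mk.injEq] at hEq
      obtain ⟨rfl, h0⟩ := hEq
      subst h0
      set x := Ring.inverse (g ^ j - 1) * y with hxdef
      have hyx : (g ^ j - 1) * x = y := inv_sol g he hg1 hgu hj1 hj2 y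
      have hx0 : x ≠ 0 := by
        intro h0; apply hy; rw [← hyx, h0, mul_zero]
      have hxy : x + y = g ^ j * x := by rw [← hyx]; ring
      have hxy0 : x + y ≠ 0 := by
        rw [hxy]
        intro h0
        exact hx0 ((((isUnit_g g he hg1).pow j).mul_right_eq_zero).mp h0)
      exact Or.inr (Or.inl ⟨hxy0, hx0, rfl, rfl,
        Olab_eq_of_mem g he hg1 ⟨j, hxy.symm⟩⟩)
  rw [hset, Set.ncard_coe_finset, Finset.card_image_of_injOn, Nat.card_Icc]
  · omega
  · intro i hi j hj hij
    rw [mem_coe, mem_Icc] at hi hj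
    rw [Prod.mk.injEq] at hij
    have hij2 := hij.2
    by_contra hne
    set xi := Ring.inverse (g ^ i - 1) * y with hxi
    have hyi : (g ^ i - 1) * xi = y := inv_sol g he hg1 hgu hi.1 hi.2 y
    have hyj : (g ^ j - 1) * xi = y := by rw [hij2]; exact inv_sol g he hg1 hgu hj.1 hj.2 y
    have hdiff : (g ^ j - g ^ i) * xi = 0 := by
      have : (g ^ j - 1) * xi - (g ^ i - 1) * xi = 0 := by rw [hyi, hyj, sub_self]
      rw [← this]; ring
    have hxi0 : xi ≠ 0 := by intro h0; apply hy; rw [← hyi, h0, mul_zero]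
    rcases Nat.lt_or_ge i j with hlt | hge
    · exact hxi0 (((gdiff_unit g he hg1 hgu hlt (by omega)).mul_right_eq_zero).mp hdiff)
    · have hlt : j < i := by omega
      have hdiff2 : (g ^ i - g ^ j) * xi = 0 := by
        rw [← neg_sub (g ^ j) (g ^ i), neg_mul, hdiff, neg_zero]
      exact hxi0 (((gdiff_unit g he hg1 hgu hlt (by omega)).mul_right_eq_zero).mp hdiff2)

omit hgu in
lemma Dfacts [NeZero e] {t c : ZMod e} (hc : c ≠ 0) (ht : t ≠ 0) (htc : t + c ≠ 0) :
    1 ≤ ((t + c).val + (e - 1) - t.val) % (e - 1) ∧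
    ((t + c).val + (e - 1) - t.val) % (e - 1) ≤ e - 2 ∧
    g ^ (e - t.val) =
      g ^ (((t + c).val + (e - 1) - t.val) % (e - 1)) * g ^ (e - (t + c).val) := by
  have hv1 := val_bounds' (e := e) htc
  have hv2 := val_bounds' (e := e) ht
  set a := (t + c).val with hadef
  set b := t.val with hbdef
  have hne : a ≠ b := by
    intro h0
    exact hc (by simpa using (ZMod.val_injective e h0))
  rcases Nat.lt_or_ge b a with hba | hab
  · -- a > b : D = a - b
    have hD : (a + (e - 1) - b) % (e - 1) = a - b := by
      rw [show a + (e - 1) - b = (a - b) + (e - 1) * 1 by omega, Nat.add_mul_mod_self_left,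
        Nat.mod_eq_of_lt (by omega)]
    refine ⟨by omega, by omega, ?_⟩
    rw [hD, ← pow_add]
    congr 1
    omega
  · -- a < b : D = (e-1) - (b - a)
    have hab' : a < b := by omega
    have hD : (a + (e - 1) - b) % (e - 1) = (e - 1) - (b - a) := by
      rw [Nat.mod_eq_of_lt (by omega)]
      omega
    refine ⟨by omega, by omega, ?_⟩
    rw [hD, ← pow_add, show (e - 1) - (b - a) + (e - a) = (e - 1) + (e - b) by omega,
      pow_add, hg1, one_mul]

lemma count_caseC [NeZero e] [NeZero n] {c : ZMod e} {y : ZMod n} (hc : c ≠ 0) (hy : y ≠ 0) :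
    {P : ZMod e × ZMod n | Fmap e g (P + (c, y)) = Fmap e g P}.ncard = e - 2 := by
  classical
  have hset : {P : ZMod e × ZMod n | Fmap e g (P + (c, y)) = Fmap e g P} =
      ↑((((univ : Finset (ZMod e)).erase 0).erase (-c)).image
        (fun t => ((t, Ring.inverse (g ^ (((t + c).val + (e - 1) - t.val) % (e - 1)) - 1) * y)
          : ZMod e × ZMod n))) := by
    ext ⟨t, x⟩
    simp only [Set.mem_setOf_eq, coe_image, Set.mem_image, mem_coe, mem_erase, mem_univ,
      and_true]
    have hadd : ((t, x) : ZMod e × ZMod n) + (c, y) = (t + c, x + y) := rfl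
    rw [hadd, Fmap_eq_iff]
    dsimp only
    constructor
    · rintro (⟨h1, h2, h3⟩ | ⟨h1, h2, h3, h4, h5⟩ | ⟨h1, h2, h3, h4, h5⟩)
      · exact absurd (by simpa [h2] using h1) hy
      · exact absurd (by rw [h4, zero_add] at h3; exact h3) hc
      · have ht : t ≠ 0 := h4
        have htc : t + c ≠ 0 := h3
        have htnc : t ≠ -c := fun h0 => htc (by rw [h0]; ring)
        obtain ⟨hD1, hD2, hD3⟩ := Dfacts g he hg1 hc ht htc
        set D := ((t + c).val + (e - 1) - t.val) % (e - 1) with hDdef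
        have hkey : x + y = g ^ D * x := by
          rw [hD3] at h5
          have h6 : (x + y - g ^ D * x) * g ^ (e - (t + c).val) = 0 := by
            rw [sub_mul, h5]; ring
          have h7 := (((isUnit_g g he hg1).pow (e - (t + c).val)).mul_left_eq_zero).mp h6
          exact sub_eq_zero.mp h7
        have hyx : (g ^ D - 1) * x = y := by rw [sub_mul, one_mul, ← hkey]; ring
        have hxval : x = Ring.inverse (g ^ D - 1) * y := by
          rw [← hyx, ← mul_assoc, Ring.inverse_mul_cancel _ (hgu D hD1 hD2), one_mul]
        exact ⟨t, ⟨htnc, ht⟩, by rw [hxval]⟩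
    · rintro ⟨t₀, ⟨hac, ha⟩, hEq⟩
      rw [Prod.mk.injEq] at hEq
      obtain ⟨ht', hx'⟩ := hEq
      subst ht'
      subst hx'
      have htc : t₀ + c ≠ 0 := fun h => hac (eq_neg_of_add_eq_zero_left h)
      obtain ⟨hD1, hD2, hD3⟩ := Dfacts g he hg1 hc ha htc
      set D := ((t₀ + c).val + (e - 1) - t₀.val) % (e - 1) with hDdef
      set x := Ring.inverse (g ^ D - 1) * y with hxdef
      have hyx : (g ^ D - 1) * x = y := inv_sol g he hg1 hgu hD1 hD2 y
      have hx0 : x ≠ 0 := fun h0 => hy (by rw [← hyx, h0, mul_zero])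
      have hkey : x + y = g ^ D * x := by rw [← hyx]; ring
      have hxy0 : x + y ≠ 0 := by
        rw [hkey]
        intro h0
        exact hx0 ((((isUnit_g g he hg1).pow D).mul_right_eq_zero).mp h0)
      refine Or.inr (Or.inr ⟨hxy0, hx0, htc, ha, ?_⟩)
      rw [hD3, hkey]
      ring
  rw [hset, Set.ncard_coe_finset,
    Finset.card_image_of_injective _ (fun a b hab => by
      simpa using (Prod.mk.injEq _ _ _ _ ▸ hab).1),
    Finset.card_erase_of_mem, Finset.card_erase_of_mem] <;>
    simp [neg_eq_zero, hc, ZMod.card]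
  omega

open scoped Classical in
lemma card_image_Fmap [NeZero e] [NeZero n] (hdvd : (e - 1) ∣ (n - 1)) :
    ((univ : Finset (ZMod e × ZMod n)).image (Fmap e g)).card
      = (e * n - 1) / (e - 1) + 1 := by
  classical
  have hsum := Finset.card_eq_sum_card_image (Fmap e g) (univ : Finset (ZMod e × ZMod n))
  have hl0 : Fmap e g ((0, 0) : ZMod e × ZMod n) = .inl (.inl ()) := by simp [Fmap]
  have hl0mem : (Sum.inl (Sum.inl ()) : (Unit ⊕ Unit) ⊕ (Set (ZMod n) ⊕ ZMod n))
      ∈ univ.image (Fmap e g) := mem_image.mpr ⟨(0, 0), mem_univ _, hl0⟩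
  have hfib0 : (univ.filter (fun P : ZMod e × ZMod n =>
      Fmap e g P = Sum.inl (Sum.inl ()))).card = 1 := by
    have : (univ.filter (fun P : ZMod e × ZMod n => Fmap e g P = Sum.inl (Sum.inl ())))
        = {((0 : ZMod e), (0 : ZMod n))} := by
      ext ⟨t, x⟩
      simp only [mem_filter, mem_univ, true_and, mem_singleton, Prod.mk.injEq]
      unfold Fmap
      split_ifs with h1 h2 <;> simp_all <;> tauto
    rw [this, Finset.card_singleton]
  have hothers : ∀ l ∈ (univ.image (Fmap e g)).erase (Sum.inl (Sum.inl ())),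
      (univ.filter (fun P : ZMod e × ZMod n => Fmap e g P = l)).card = e - 1 := by
    intro l hl
    obtain ⟨hlne, hl'⟩ := Finset.mem_erase.mp hl
    obtain ⟨⟨s0, z⟩, _, rfl⟩ := mem_image.mp hl'
    by_cases hz : z = 0
    · have hs0 : s0 ≠ 0 := by
        intro h0
        exact hlne (by rw [h0, hz]; exact hl0)
      have hlval : Fmap e g (s0, z) = .inl (.inr ()) := by simp [Fmap, hz, hs0]
      have hfil : (univ.filter (fun P : ZMod e × ZMod n => Fmap e g P = Fmap e g (s0, z)))
          = ((univ : Finset (ZMod e)).erase 0).image (fun t => (t, (0 : ZMod n))) := by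
        ext ⟨t, x⟩
        simp only [mem_filter, mem_univ, true_and, mem_image, mem_erase, and_true, hlval]
        constructor
        · intro h
          have : x = 0 ∧ t ≠ 0 := by
            unfold Fmap at h; split_ifs at h <;> simp_all
          exact ⟨t, this.2, by rw [this.1]⟩
        · rintro ⟨a, ha, hEq⟩
          rw [Prod.mk.injEq] at hEq
          obtain ⟨ht', hx'⟩ := hEq
          subst ht'; subst hx'
          simp [Fmap, ha]
      rw [hfil, Finset.card_image_of_injective _ (fun a b hab => by
        simpa using (Prod.mk.injEq _ _ _ _ ▸ hab).1),
        Finset.card_erase_of_mem (mem_univ _), card_univ, ZMod.card]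
    · by_cases hs0 : s0 = 0
      · have hlval : Fmap e g (s0, z) = .inr (.inl (Olab g z)) := by simp [Fmap, hz, hs0]
        have hfil : (univ.filter (fun P : ZMod e × ZMod n => Fmap e g P = Fmap e g (s0, z)))
            = (Finset.range (e - 1)).image (fun j => ((0 : ZMod e), g ^ j * z)) := by
          ext ⟨t, x⟩
          simp only [mem_filter, mem_univ, true_and, mem_image, mem_range, hlval]
          constructor
          · intro h
            have hcond : x ≠ 0 ∧ t = 0 ∧ Olab g x = Olab g z := by
              unfold Fmap at h; split_ifs at h <;> simp_all
            obtain ⟨hx0, ht0, holab⟩ := hcond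
            obtain ⟨j, hj, hxj⟩ := (Olab_eq_iff g he hg1).mp holab
            exact ⟨j, by omega, by rw [ht0, hxj]⟩
          · rintro ⟨j, hj, hEq⟩
            rw [Prod.mk.injEq] at hEq
            obtain ⟨ht', hx'⟩ := hEq
            subst ht'; subst hx'
            have hx0 : g ^ j * z ≠ 0 := fun h0 =>
              hz ((((isUnit_g g he hg1).pow j).mul_right_eq_zero).mp h0)
            simp only [Fmap, if_neg hx0, if_pos rfl]
            exact congrArg _ (congrArg _ (Olab_eq_of_mem g he hg1 ⟨j, rfl⟩))
        rw [hfil, Finset.card_image_of_injOn, Finset.card_range]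
        intro i hi j hj hij
        rw [mem_coe, mem_range] at hi hj
        rw [Prod.mk.injEq] at hij
        have hij2 := hij.2
        by_contra hne
        rcases Nat.lt_or_ge i j with hlt | hge
        · have : (g ^ j - g ^ i) * z = 0 := by rw [sub_mul, hij2, sub_self]
          exact hz (((gdiff_unit g he hg1 hgu hlt (by omega)).mul_right_eq_zero).mp this)
        · have hlt : j < i := by omega
          have : (g ^ i - g ^ j) * z = 0 := by rw [sub_mul, hij2, sub_self]
          exact hz (((gdiff_unit g he hg1 hgu hlt (by omega)).mul_right_eq_zero).mp this)
      · have hvz := val_bounds' (e := e) hs0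
        set w := z * g ^ (e - s0.val) with hwdef
        have hw0 : w ≠ 0 := fun h0 =>
          hz ((((isUnit_g g he hg1).pow (e - s0.val)).mul_left_eq_zero).mp h0)
        have hlval : Fmap e g (s0, z) = .inr (.inr w) := by simp [Fmap, hz, hs0, hwdef]
        have hfil : (univ.filter (fun P : ZMod e × ZMod n => Fmap e g P = Fmap e g (s0, z)))
            = ((univ : Finset (ZMod e)).erase 0).image
              (fun t => (t, w * g ^ (t.val - 1))) := by
          ext ⟨t, x⟩
          simp only [mem_filter, mem_univ, true_and, mem_image, mem_erase, and_true, hlval]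
          constructor
          · intro h
            have hcond : x ≠ 0 ∧ t ≠ 0 ∧ x * g ^ (e - t.val) = w := by
              unfold Fmap at h; split_ifs at h <;> simp_all
            obtain ⟨hx0, ht0, hxw⟩ := hcond
            have hvt := val_bounds' (e := e) ht0
            have hxval : x = w * g ^ (t.val - 1) := by
              rw [← hxw, mul_assoc, ← pow_add, show e - t.val + (t.val - 1) = e - 1 by omega,
                hg1, mul_one]
            exact ⟨t, ht0, by rw [hxval]⟩
          · rintro ⟨a, ha, hEq⟩
            rw [Prod.mk.injEq] at hEq
            obtain ⟨ht', hx'⟩ := hEq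
            subst ht'; subst hx'
            have hva := val_bounds' (e := e) ha
            have hx0 : w * g ^ (a.val - 1) ≠ 0 := fun h0 =>
              hw0 ((((isUnit_g g he hg1).pow (a.val - 1)).mul_left_eq_zero).mp h0)
            simp only [Fmap, if_neg hx0, if_neg ha]
            congr 1
            congr 1
            rw [mul_assoc, ← pow_add, show a.val - 1 + (e - a.val) = e - 1 by omega,
              hg1, mul_one]
        rw [hfil, Finset.card_image_of_injective _ (fun a b hab => by
          simpa using (Prod.mk.injEq _ _ _ _ ▸ hab).1),
          Finset.card_erase_of_mem (mem_univ _), card_univ, ZMod.card]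
  -- assemble
  rw [← Finset.add_sum_erase _ _ hl0mem, hfib0, Finset.sum_congr rfl hothers,
    Finset.sum_const, smul_eq_mul, Finset.card_erase_of_mem hl0mem] at hsum
  have hcard : (univ : Finset (ZMod e × ZMod n)).card = e * n := by
    rw [card_univ, Fintype.card_prod, ZMod.card, ZMod.card]
  rw [hcard] at hsum
  obtain ⟨s, hs⟩ := hdvd
  have hC1 : 1 ≤ (univ.image (Fmap e g)).card := Finset.card_pos.mpr ⟨_, hl0mem⟩
  set C := (univ.image (Fmap e g)).card with hCdef
  set E := e - 1 with hEdef
  have hE : e = E + 1 := by omega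
  have hEpos : 0 < E := by omega
  have hnpos : 0 < n := Nat.pos_of_ne_zero (NeZero.ne n)
  have hn1 : n = E * s + 1 := by omega
  have h3 : e * n = E * (E * s + s + 1) + 1 := by rw [hE, hn1]; ring
  have h4 : e * n - 1 = E * (E * s + s + 1) := by omega
  have h5 : (e * n - 1) / (e - 1) = E * s + s + 1 := by
    rw [h4, ← hEdef, Nat.mul_div_cancel_left _ hEpos]
  have h6 : (C - 1) * E = E * (E * s + s + 1) := by omega
  have h7 : C - 1 = E * s + s + 1 :=
    Nat.eq_of_mul_eq_mul_left hEpos (by rw [mul_comm E (C - 1)]; exact h6)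
  rw [h5, ← h7]
  omega

end hg
end Construction

section NT

lemma isUnit_of_castHom_ne_zero {p r : ℕ} (hp : p.Prime) (hr : 0 < r) (x : ZMod (p ^ r))
    (h : ZMod.castHom (dvd_pow_self p hr.ne') (ZMod p) x ≠ 0) : IsUnit x := by
  haveI : Fact p.Prime := ⟨hp⟩
  haveI : NeZero (p ^ r) := ⟨pow_ne_zero r hp.pos.ne'⟩
  have hx : ((x.val : ℕ) : ZMod (p ^ r)) = x := ZMod.natCast_rightInverse x
  rw [← hx, ZMod.isUnit_iff_coprime]
  rw [Nat.coprime_pow_right_iff hr]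
  rw [Nat.coprime_comm, hp.coprime_iff_not_dvd]
  intro hdvd
  apply h
  have h2 : (ZMod.castHom (dvd_pow_self p hr.ne') (ZMod p)) x = ((x.val : ℕ) : ZMod p) := by
    rw [ZMod.castHom_apply, ← ZMod.natCast_val]
  rw [h2]
  exact (ZMod.natCast_eq_zero_iff x.val p).mpr hdvd

lemma exists_good_pp {e p r : ℕ} (he : 2 ≤ e) (hp : p.Prime) (hr : 0 < r)
    (hdvd : (e - 1) ∣ (p - 1)) :
    ∃ g : ZMod (p ^ r), g ^ (e - 1) = 1 ∧ ∀ j, 1 ≤ j → j ≤ e - 2 → IsUnit (g ^ j - 1) := by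
  haveI : Fact p.Prime := ⟨hp⟩
  haveI : NeZero (p ^ r) := ⟨pow_ne_zero r hp.pos.ne'⟩
  have hp1 : 1 ≤ p - 1 := by have := hp.two_le; omega
  obtain ⟨z, hz⟩ := IsCyclic.exists_ofOrder_eq_natCard (α := (ZMod p)ˣ)
  have hcardp : Nat.card (ZMod p)ˣ = p - 1 := by
    rw [Nat.card_eq_fintype_card, ZMod.card_units]
  rw [hcardp] at hz
  set v := z ^ ((p - 1) / (e - 1)) with hv
  have hordv : orderOf v = e - 1 := by
    rw [hv, orderOf_pow, hz, Nat.gcd_eq_right (Nat.div_dvd_of_dvd hdvd),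
      Nat.div_div_self hdvd (by omega)]
  have hsurj := ZMod.unitsMap_surjective (m := p ^ r) (n := p) (dvd_pow_self p hr.ne')
  set φ := ZMod.unitsMap (dvd_pow_self p hr.ne') with hφ
  obtain ⟨h, hh⟩ := hsurj v
  set d := orderOf h with hd
  have hdpos : 0 < d := orderOf_pos h
  have hdvd1 : (e - 1) ∣ d := by
    have h1 : orderOf (φ h) ∣ d := orderOf_map_dvd φ h
    rwa [hh, hordv] at h1
  set u := h ^ (d / (e - 1)) with hu
  have hordu : orderOf u = e - 1 := by
    rw [hu, orderOf_pow, ← hd, Nat.gcd_eq_right (Nat.div_dvd_of_dvd hdvd1),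
      Nat.div_div_self hdvd1 hdpos.ne']
  set t := orderOf (φ u) with ht
  have htdvd : t ∣ e - 1 := by rw [ht, ← hordu]; exact orderOf_map_dvd φ u
  have humem : u ^ t ∈ φ.ker := by
    rw [MonoidHom.mem_ker, map_pow]
    exact pow_orderOf_eq_one (φ u)
  have hcardker : Nat.card φ.ker = p ^ (r - 1) := by
    have h1 : Nat.card (ZMod (p ^ r))ˣ = Nat.card ((ZMod (p ^ r))ˣ ⧸ φ.ker) * Nat.card φ.ker :=
      Subgroup.card_eq_card_quotient_mul_card_subgroup φ.ker
    have h2 : Nat.card ((ZMod (p ^ r))ˣ ⧸ φ.ker) = Nat.card (ZMod p)ˣ :=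
      Nat.card_congr (QuotientGroup.quotientKerEquivOfSurjective φ hsurj).toEquiv
    have h3 : Nat.card (ZMod (p ^ r))ˣ = p ^ (r - 1) * (p - 1) := by
      rw [Nat.card_eq_fintype_card, ZMod.card_units_eq_totient, Nat.totient_prime_pow hp hr]
    rw [h2, hcardp, h3] at h1
    have h4 : (p - 1) * (p ^ (r - 1)) = (p - 1) * Nat.card φ.ker := by
      rw [mul_comm (p-1) (p ^ (r-1)), h1, mul_comm]
    exact (Nat.eq_of_mul_eq_mul_left (by omega) h4).symm
  have hord2 : orderOf (u ^ t) = (e - 1) / t := by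
    rw [orderOf_pow, hordu, Nat.gcd_eq_right htdvd]
  have hq1 : (e - 1) / t ∣ p ^ (r - 1) := by
    rw [← hord2, ← hcardker]
    exact Subgroup.orderOf_dvd_natCard φ.ker humem
  have hq2 : (e - 1) / t ∣ p - 1 := dvd_trans (Nat.div_dvd_of_dvd htdvd) hdvd
  have hcop : Nat.Coprime (p ^ (r - 1)) (p - 1) := by
    apply Nat.Coprime.pow_left
    rw [Nat.coprime_comm] at *
    rw [Nat.coprime_comm]
    exact hp.coprime_iff_not_dvd.mpr
      (fun hd => absurd (Nat.le_of_dvd (by omega) hd) (by omega))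
  have h1t : (e - 1) / t = 1 := by
    have := Nat.dvd_gcd hq1 hq2
    rw [Nat.Coprime.gcd_eq_one hcop] at this
    exact Nat.eq_one_of_dvd_one this
  have htval : t = e - 1 := by
    have h2 := Nat.mul_div_cancel' htdvd
    rw [h1t, mul_one] at h2
    exact h2
  refine ⟨(u : ZMod (p ^ r)), ?_, ?_⟩
  · have h0 : u ^ (e - 1) = 1 := hordu ▸ pow_orderOf_eq_one u
    have := congrArg Units.val h0
    rwa [Units.val_pow_eq_pow_val, Units.val_one] at this
  · intro j hj1 hj2
    apply isUnit_of_castHom_ne_zero hp hr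
    rw [map_sub, map_pow, map_one]
    have hcast : (ZMod.castHom (dvd_pow_self p hr.ne') (ZMod p)) (u : ZMod (p ^ r))
        = ((φ u : (ZMod p)ˣ) : ZMod p) := by
      rw [hφ, ZMod.unitsMap_def]
      rfl
    rw [hcast]
    intro h0
    have h0' : (φ u) ^ j = 1 := by
      apply Units.ext
      push_cast
      have := sub_eq_zero.mp h0
      exact_mod_cast this
    have hj3 : (e - 1) ∣ j := by
      rw [← htval, ht]
      exact orderOf_dvd_of_pow_eq_one h0'
    have := Nat.le_of_dvd (by omega) hj3
    omega

lemma exists_good_comb {e a b : ℕ} (hab : Nat.Coprime a b)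
    (ha : ∃ g : ZMod a, g ^ (e - 1) = 1 ∧ ∀ j, 1 ≤ j → j ≤ e - 2 → IsUnit (g ^ j - 1))
    (hb : ∃ g : ZMod b, g ^ (e - 1) = 1 ∧ ∀ j, 1 ≤ j → j ≤ e - 2 → IsUnit (g ^ j - 1)) :
    ∃ g : ZMod (a * b), g ^ (e - 1) = 1 ∧ ∀ j, 1 ≤ j → j ≤ e - 2 → IsUnit (g ^ j - 1) := by
  obtain ⟨g1, hg1a, hg1b⟩ := ha
  obtain ⟨g2, hg2a, hg2b⟩ := hb
  set ρ := ZMod.chineseRemainder hab with hρ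
  refine ⟨ρ.symm (g1, g2), ?_, ?_⟩
  · have : ρ (ρ.symm (g1, g2) ^ (e - 1)) = ρ 1 := by
      rw [map_pow, map_one, RingEquiv.apply_symm_apply, Prod.pow_mk, hg1a, hg2a, Prod.mk_one_one]
    exact ρ.injective this
  · intro j hj1 hj2
    have hkey : ρ.symm (g1, g2) ^ j - 1 = ρ.symm ((g1 ^ j - 1, g2 ^ j - 1)) := by
      apply ρ.injective
      rw [map_sub, map_pow, map_one, RingEquiv.apply_symm_apply, RingEquiv.apply_symm_apply,
        Prod.pow_mk]
      rfl
    rw [hkey]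
    have hunit : IsUnit ((g1 ^ j - 1, g2 ^ j - 1) : ZMod a × ZMod b) := by
      obtain ⟨u1, hu1⟩ := hg1b j hj1 hj2
      obtain ⟨u2, hu2⟩ := hg2b j hj1 hj2
      exact IsUnit.of_mul_eq_one ((↑u1⁻¹, ↑u2⁻¹) : ZMod a × ZMod b) (by
        rw [Prod.mk_mul_mk, ← hu1, ← hu2, Units.mul_inv, Units.mul_inv, Prod.mk_one_one])
    exact hunit.map (ρ.symm : ZMod a × ZMod b →+* ZMod (a * b))

lemma exists_good (e : ℕ) (he : 2 ≤ e) (n : ℕ)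
    (hcond : ∀ q : ℕ, q.Prime → q ∣ n → (e - 1) ∣ q - 1) (hnz : n ≠ 0) :
    ∃ g : ZMod n, g ^ (e - 1) = 1 ∧ ∀ j, 1 ≤ j → j ≤ e - 2 → IsUnit (g ^ j - 1) := by
  induction n using Nat.recOnPosPrimePosCoprime with
  | prime_pow p k hpp hk =>
      have hp' : p.Prime := hpp
      exact exists_good_pp he hp' hk (hcond p hp' (dvd_pow_self p hk.ne'))
  | zero => exact absurd rfl hnz
  | one =>
      refine ⟨1, one_pow _, fun j _ _ => ?_⟩
      haveI : Subsingleton (ZMod 1) := by infer_instance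
      rw [Subsingleton.elim ((1 : ZMod 1) ^ j - 1) 1]
      exact isUnit_one
  | coprime a b ha hb hab IHa IHb =>
      refine exists_good_comb hab (IHa ?_ (by omega)) (IHb ?_ (by omega))
      · exact fun q hq hqa => hcond q hq (hqa.mul_right b)
      · exact fun q hq hqb => hcond q hq (hqb.mul_left a)

end NT

/-- `f : A → B` is an `(N, m, λ)` zero-difference balanced function. -/
def IsZDB {A B : Type*} [AddGroup A] (f : A → B) (N m lam : ℕ) : Prop :=
  Nat.card A = N ∧ Set.ncard (Set.range f) = m ∧
    ∀ a : A, a ≠ 0 → Set.ncard {x : A | f (x + a) = f x} = lam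

/-- Corollary 1: for `n` a product of odd prime powers and `e(e-1)` dividing
`gcd(p_i - 1)`, there is an `(en, (en-1)/(e-1)+1, e-2)` ZDB function on `Z_{en}`. -/
theorem zdb_on_Zn (k : ℕ) (hk : 0 < k) (p r : Fin k → ℕ)
    (hp : ∀ i, Nat.Prime (p i)) (hodd : ∀ i, 2 < p i) (hmono : StrictMono p)
    (hr : ∀ i, 0 < r i) (n e : ℕ) (hn : n = ∏ i, p i ^ r i) (he : 0 < e)
    (hdiv : ∀ i, e * (e - 1) ∣ p i - 1) :
    ∃ f : ZMod (e * n) → ZMod ((e * n - 1) / (e - 1) + 1),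
      IsZDB f (e * n) ((e * n - 1) / (e - 1) + 1) (e - 2) := by
  classical
  have i0 : Fin k := ⟨0, hk⟩
  have he2 : 2 ≤ e := by
    by_contra h
    have he1 : e = 1 := by omega
    have := hdiv i0
    rw [he1] at this
    simp only [Nat.sub_self, mul_zero, Nat.zero_dvd] at this
    have := hodd i0
    omega
  -- every prime divisor of n is some p i
  have hprim : ∀ q : ℕ, q.Prime → q ∣ n → ∃ i, q = p i := by
    intro q hq hqn
    rw [hn] at hqn
    obtain ⟨i, _, hqi⟩ := (Prime.dvd_finset_prod_iff hq.prime _).mp hqn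
    exact ⟨i, (Nat.prime_dvd_prime_iff_eq hq (hp i)).mp (hq.dvd_of_dvd_pow hqi)⟩
  have hpd1 : ∀ i, (e - 1) ∣ p i - 1 := fun i => (dvd_mul_left (e - 1) e).trans (hdiv i)
  have hpd2 : ∀ i, e ∣ p i - 1 := fun i => (dvd_mul_right e (e - 1)).trans (hdiv i)
  have hnz : n ≠ 0 := by
    rw [hn]
    exact (Finset.prod_pos (fun i _ => pow_pos (hp i).pos (r i))).ne'
  -- coprimality of e and n
  have hco : Nat.Coprime e n := by
    rw [hn]
    apply Nat.Coprime.prod_right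
    intro i _
    apply Nat.Coprime.pow_right
    rw [Nat.coprime_comm]
    refine ((hp i).coprime_iff_not_dvd).mpr (fun hd => ?_)
    have h1 : p i ∣ p i - 1 := hd.trans (hpd2 i)
    have h2 := Nat.le_of_dvd (by have := hodd i; omega) h1
    have := hodd i
    omega
  -- (e-1) | (n-1)
  have hdvdn1 : (e - 1) ∣ (n - 1) := by
    have hcast : ((n : ℕ) : ZMod (e - 1)) = ((1 : ℕ) : ZMod (e - 1)) := by
      rw [hn]
      push_cast
      have hterm : ∀ i ∈ Finset.univ, ((p i : ZMod (e - 1))) ^ r i = 1 := by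
        intro i _
        have h1 : ((p i : ℕ) : ZMod (e - 1)) = 1 := by
          have h2 : p i = (p i - 1) + 1 := by have := hodd i; omega
          rw [h2]
          push_cast
          rw [(ZMod.natCast_eq_zero_iff _ _).mpr (hpd1 i), zero_add]
        rw [h1, one_pow]
      rw [Finset.prod_congr rfl hterm, Finset.prod_const_one]
    have hmod := (ZMod.natCast_eq_natCast_iff _ _ _).mp hcast
    exact (Nat.modEq_iff_dvd' (by omega)).mp hmod.symm
  -- get g
  obtain ⟨g, hg1, hgu⟩ := exists_good e he2 n
    (fun q hq hqn => by obtain ⟨i, rfl⟩ := hprim q hq hqn; exact hpd1 i) hnz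
  haveI : NeZero e := ⟨by omega⟩
  haveI : NeZero n := ⟨hnz⟩
  haveI : NeZero (e * n) := ⟨Nat.mul_ne_zero (by omega) hnz⟩
  set m := (e * n - 1) / (e - 1) + 1 with hmdef
  haveI : NeZero m := ⟨Nat.succ_ne_zero _⟩
  set ψ := ZMod.chineseRemainder hco with hψ
  set F := Fmap e g with hF
  have hrange_card : Fintype.card (Set.range F) = m := by
    rw [← Set.toFinset_card, Set.toFinset_range, card_image_Fmap g he2 hg1 hgu hdvdn1]
  let ρ : (Set.range F) ≃ ZMod m := Fintype.equivOfCardEq (by rw [hrange_card, ZMod.card])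
  refine ⟨fun x => ρ ⟨F (ψ x), Set.mem_range_self _⟩, Nat.card_zmod _, ?_, ?_⟩
  · have hsurj : Function.Surjective
        (fun x : ZMod (e * n) => ρ ⟨F (ψ x), Set.mem_range_self _⟩) := by
      intro z
      obtain ⟨P, hP⟩ := (ρ.symm z).2
      refine ⟨ψ.symm P, ?_⟩
      simp only
      rw [RingEquiv.apply_symm_apply]
      have h2 : (⟨F P, Set.mem_range_self _⟩ : Set.range F) = ρ.symm z := Subtype.ext hP
      rw [h2, Equiv.apply_symm_apply]
    rw [Set.range_eq_univ.mpr hsurj, Set.ncard_univ, Nat.card_zmod]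
  · intro a ha
    have hfeq : ∀ x : ZMod (e * n),
        (ρ ⟨F (ψ (x + a)), Set.mem_range_self _⟩ = ρ ⟨F (ψ x), Set.mem_range_self _⟩)
          ↔ F (ψ x + ψ a) = F (ψ x) := by
      intro x
      rw [map_add]
      exact ⟨fun h => congrArg Subtype.val (ρ.injective h),
        fun h => congrArg ρ (Subtype.ext h)⟩
    have hset : {x : ZMod (e * n) |
        ρ ⟨F (ψ (x + a)), Set.mem_range_self _⟩ = ρ ⟨F (ψ x), Set.mem_range_self _⟩}
          = ψ.toEquiv ⁻¹' {P | F (P + ψ a) = F P} := by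
      ext x
      simp only [Set.mem_setOf_eq, Set.mem_preimage]
      exact hfeq x
    rw [hset, ← Equiv.symm_symm ψ.toEquiv, ← Equiv.image_eq_preimage_symm,
      Set.ncard_image_of_injective _ (ψ.toEquiv.symm.injective)]
    have hb : ψ a ≠ 0 := fun h0 => ha (ψ.injective (h0.trans (map_zero ψ).symm))
    rcases hcy : ψ a with ⟨c, y⟩
    simp only [hF]
    by_cases hc : c = 0
    · by_cases hy : y = 0
      · exact absurd (by rw [hcy, hc, hy]; rfl) hb
      · subst hc
        exact count_caseB g he2 hg1 hgu hy
    · by_cases hy : y = 0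
      · subst hy
        exact count_caseA g he2 hg1 hgu hc
      · exact count_caseC g he2 hg1 hgu hc hy
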